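/- Let (Ω, 𝓕, P) be a probability space with a filtration (𝓕_t)_{t∈[0,T]} of sub-σ-algebras of 𝓕, and let W : [0,T] → Ω → ℝ^d be a martingale with respect to (𝓕_t) and P with W_0 = 0. Let H : [0,T] × Ω → ℝ^d be jointly measurable, adapted to (𝓕_t), and satisfy E_P[∫_0^T ‖H_s‖ ds] < ∞. Define Y_t(ω) = Y_0(ω) + ∫_0^t H_s(ω) ds + W_t(ω). Let (𝓡_t)_{t∈[0,T]} be a filtration with 𝓡_t ⊆ 𝓕_t for every t and such that Y_t − Y_0 is 𝓡_t-measurable for every t. Let G : [0,T] × Ω → ℝ^d be jointly measurable, adapted to (𝓡_t), with E_P[∫_0^T ‖G_s‖ ds] < ∞, and such that for every s ∈ [0,T], G_s is a version of the conditional expectation E_P[H_s | 𝓡_s] (i.e., G_s = E_P[H_s | 𝓡_s] P-almost surely). Then the process M_t := Y_t − Y_0 − ∫_0^t G_s ds, t ∈ [0,T], is a martingale with respect to the filtration (𝓡_t) and the measure P. -/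

import Mathlib

open MeasureTheory
open scoped ENNReal


open Set Filter Topology Function
open scoped symmDiff

section Helpers
variable {α : Type*} {mα : MeasurableSpace α} {μ : Measure α}
  {E : Type*} [NormedAddCommGroup E]

private lemma indicatorConstLp_congr_set {s t : Set α} (h : s = t)
    (hs : MeasurableSet s) (hμs : μ s ≠ ∞) (ht : MeasurableSet t) (hμt : μ t ≠ ∞) (c : E) :
    indicatorConstLp 1 hs hμs c = indicatorConstLp 1 ht hμt c := by
  subst h; rfl

private lemma indicatorConstLp_compl' [IsFiniteMeasure μ] {B : Set α} (hB : MeasurableSet B)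
    (c : E) :
    indicatorConstLp 1 hB.compl (measure_ne_top μ _) c
      = indicatorConstLp 1 MeasurableSet.univ (measure_ne_top μ _) c
        - indicatorConstLp 1 hB (measure_ne_top μ _) c := by
  rw [eq_sub_iff_add_eq, ← indicatorConstLp_disjoint_union hB.compl hB (measure_ne_top μ _) (measure_ne_top μ _) disjoint_compl_left c]
  exact indicatorConstLp_congr_set (Set.compl_union_self B) (hB.compl.union hB) (measure_ne_top μ _) MeasurableSet.univ (measure_ne_top μ _) c

private lemma indicatorConstLp_biUnion_range [IsFiniteMeasure μ] (c : E)
    (B : ℕ → Set α) (hB : ∀ i, MeasurableSet (B i)) (hd : Pairwise (Disjoint on B)) (n : ℕ)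
    (hU : MeasurableSet (⋃ i ∈ Finset.range n, B i)) :
    indicatorConstLp 1 hU (measure_ne_top μ _) c
      = ∑ i ∈ Finset.range n, indicatorConstLp 1 (hB i) (measure_ne_top μ _) c := by
  induction n with
  | zero =>
      simp only [Finset.sum_range_zero]
      rw [indicatorConstLp_congr_set (by simp) hU (measure_ne_top μ _) MeasurableSet.empty (measure_ne_top μ _) c]
      exact indicatorConstLp_empty
  | succ n ih =>
      have hU' : MeasurableSet (⋃ i ∈ Finset.range n, B i) :=
        (Finset.range n).measurableSet_biUnion (fun i _ => hB i)
      have hdisj : Disjoint (⋃ i ∈ Finset.range n, B i) (B n) := by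
        simp only [Set.disjoint_iUnion_left]
        exact fun i hi => hd (Finset.mem_range.mp hi).ne
      have hset : (⋃ i ∈ Finset.range (n + 1), B i)
          = (⋃ i ∈ Finset.range n, B i) ∪ B n := by
        simp [Finset.range_add_one, Set.union_comm]
      rw [indicatorConstLp_congr_set hset hU (measure_ne_top μ _) (hU'.union (hB n))
        (measure_ne_top μ _) c,
        indicatorConstLp_disjoint_union hU' (hB n) (measure_ne_top μ _) (measure_ne_top μ _)
          hdisj c, ih hU', Finset.sum_range_succ]


private lemma sm_indicatorConstLp_slice
    {Ω : Type*} {mΩ : MeasurableSpace Ω} {P : Measure Ω} [IsFiniteMeasure P] (c : E)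
    {A : Set (ℝ × Ω)} (hA : MeasurableSet A)
    (h : ∀ s : ℝ, MeasurableSet (Prod.mk s ⁻¹' A)) :
    StronglyMeasurable (fun s : ℝ =>
      (indicatorConstLp 1 (h s) (measure_ne_top P _) c : Ω →₁[P] E)) := by
  classical
  have main : ∀ A : Set (ℝ × Ω), MeasurableSet A →
      ∀ h : ∀ s : ℝ, MeasurableSet (Prod.mk s ⁻¹' A),
      StronglyMeasurable (fun s : ℝ =>
        (indicatorConstLp 1 (h s) (measure_ne_top P _) c : Ω →₁[P] E)) := by
    refine MeasurableSpace.induction_on_inter generateFrom_prod.symm isPiSystem_prod ?_ ?_ ?_ ?_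
    · -- empty
      intro h
      have : (fun s : ℝ => (indicatorConstLp 1 (h s) (measure_ne_top P _) c : Ω →₁[P] E))
          = fun _ => 0 := by
        funext s
        rw [indicatorConstLp_congr_set (Set.preimage_empty) (h s) (measure_ne_top P _)
          MeasurableSet.empty (measure_ne_top P _) c]
        exact indicatorConstLp_empty
      rw [this]; exact stronglyMeasurable_const
    · -- rectangles
      rintro A ⟨I, hI, S, hS, rfl⟩ h
      simp only [Set.mem_setOf_eq] at hI hS
      have : (fun s : ℝ => (indicatorConstLp 1 (h s) (measure_ne_top P _) c : Ω →₁[P] E))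
          = fun s => if s ∈ I then
              (indicatorConstLp 1 hS (measure_ne_top P _) c : Ω →₁[P] E) else 0 := by
        funext s
        by_cases hsI : s ∈ I
        · rw [if_pos hsI, indicatorConstLp_congr_set
            (by rw [Set.mk_preimage_prod_right_eq_if, if_pos hsI]) (h s) (measure_ne_top P _)
            hS (measure_ne_top P _) c]
        · rw [if_neg hsI, indicatorConstLp_congr_set
            (by rw [Set.mk_preimage_prod_right_eq_if, if_neg hsI]) (h s) (measure_ne_top P _)
            MeasurableSet.empty (measure_ne_top P _) c]
          exact indicatorConstLp_empty
      rw [this]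
      exact StronglyMeasurable.ite hI stronglyMeasurable_const stronglyMeasurable_const
    · -- complement
      intro A hA ih h
      have hsl : ∀ s : ℝ, MeasurableSet (Prod.mk s ⁻¹' A) :=
        fun s => hA.preimage measurable_prodMk_left
      have : (fun s : ℝ => (indicatorConstLp 1 (h s) (measure_ne_top P _) c : Ω →₁[P] E))
          = fun s => (indicatorConstLp 1 MeasurableSet.univ (measure_ne_top P _) c : Ω →₁[P] E)
              - indicatorConstLp 1 (hsl s) (measure_ne_top P _) c := by
        funext s
        rw [indicatorConstLp_congr_set (Set.preimage_compl) (h s) (measure_ne_top P _)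
          (hsl s).compl (measure_ne_top P _) c]
        rw [eq_sub_iff_add_eq, ← indicatorConstLp_disjoint_union (hsl s).compl (hsl s)
          (measure_ne_top P _) (measure_ne_top P _) disjoint_compl_left c]
        exact indicatorConstLp_congr_set (Set.compl_union_self _) _ (measure_ne_top P _)
          MeasurableSet.univ (measure_ne_top P _) c
      rw [this]
      exact stronglyMeasurable_const.sub (ih hsl)
    · -- disjoint unions
      intro B hd hBm ih h
      have hsl : ∀ i, ∀ s : ℝ, MeasurableSet (Prod.mk s ⁻¹' B i) :=
        fun i s => (hBm i).preimage measurable_prodMk_left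
      -- partial sums are strongly measurable
      have hsum : ∀ n : ℕ, StronglyMeasurable (fun s : ℝ =>
          ∑ i ∈ Finset.range n,
            (indicatorConstLp 1 (hsl i s) (measure_ne_top P _) c : Ω →₁[P] E)) := by
        intro n
        exact Finset.stronglyMeasurable_fun_sum _ (fun i _ => ih i (hsl i))
      refine stronglyMeasurable_of_tendsto atTop hsum (tendsto_pi_nhds.mpr ?_)
      intro s
      have hslU : ∀ n : ℕ, MeasurableSet (⋃ i ∈ Finset.range n, Prod.mk s ⁻¹' B i) :=
        fun n => (Finset.range n).measurableSet_biUnion (fun i _ => hsl i s)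
      have hdisj : Pairwise (Disjoint on fun i => Prod.mk s ⁻¹' B i) := by
        intro i j hij
        exact Set.disjoint_of_subset (Set.preimage_mono (subset_refl _))
          (Set.preimage_mono (subset_refl _)) ((hd hij).preimage _)
      have hpartial : ∀ n : ℕ, (∑ i ∈ Finset.range n,
            (indicatorConstLp 1 (hsl i s) (measure_ne_top P _) c : Ω →₁[P] E))
          = indicatorConstLp 1 (hslU n) (measure_ne_top P _) c := by
        intro n
        exact (indicatorConstLp_biUnion_range c _ (fun i => hsl i s) hdisj n (hslU n)).symm
      simp only [hpartial]
      -- convergence of indicators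
      have hU : Prod.mk s ⁻¹' (⋃ i, B i) = ⋃ i, Prod.mk s ⁻¹' B i := by
        simp [Set.preimage_iUnion]
      have htarget : (indicatorConstLp 1 (h s) (measure_ne_top P _) c : Ω →₁[P] E)
          = indicatorConstLp 1 (MeasurableSet.iUnion (fun i => hsl i s))
              (measure_ne_top P _) c :=
        indicatorConstLp_congr_set hU (h s) (measure_ne_top P _) _ (measure_ne_top P _) c
      rw [htarget]
      refine tendsto_indicatorConstLp_set (by norm_num) ?_
      -- μ (t n ∆ s) → 0
      have hsub : ∀ n, (⋃ i ∈ Finset.range n, Prod.mk s ⁻¹' B i) ⊆ ⋃ i, Prod.mk s ⁻¹' B i := by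
        intro n
        exact Set.iUnion₂_subset fun i _ => Set.subset_iUnion (fun j => Prod.mk s ⁻¹' B j) i
      have hmono : Monotone (fun n => ⋃ i ∈ Finset.range n, Prod.mk s ⁻¹' B i) := by
        intro a b hab
        exact Set.biUnion_subset_biUnion_left (fun i hi =>
          Finset.mem_range.mpr (lt_of_lt_of_le (Finset.mem_range.mp hi) hab))
      have hUeq : (⋃ n, ⋃ i ∈ Finset.range n, Prod.mk s ⁻¹' B i) = ⋃ i, Prod.mk s ⁻¹' B i := by
        apply Set.Subset.antisymm
        · exact Set.iUnion_subset hsub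
        · intro x hx
          obtain ⟨i, hi⟩ := Set.mem_iUnion.mp hx
          exact Set.mem_iUnion.mpr ⟨i + 1, Set.mem_biUnion (Finset.self_mem_range_succ i) hi⟩
      have hlim : Tendsto (fun n => P (⋃ i ∈ Finset.range n, Prod.mk s ⁻¹' B i)) atTop
          (𝓝 (P (⋃ i, Prod.mk s ⁻¹' B i))) := by
        rw [← hUeq]
        exact tendsto_measure_iUnion_atTop hmono
      have hdiff : ∀ n, P ((⋃ i ∈ Finset.range n, Prod.mk s ⁻¹' B i) ∆ (⋃ i, Prod.mk s ⁻¹' B i))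
          = P (⋃ i, Prod.mk s ⁻¹' B i) - P (⋃ i ∈ Finset.range n, Prod.mk s ⁻¹' B i) := by
        intro n
        rw [Set.symmDiff_def]
        rw [Set.diff_eq_empty.mpr (hsub n), Set.union_comm, Set.union_empty]
        exact measure_diff (hsub n) (hslU n).nullMeasurableSet (measure_ne_top P _)
      simp only [hdiff]
      have : Tendsto (fun n => P (⋃ i, Prod.mk s ⁻¹' B i)
          - P (⋃ i ∈ Finset.range n, Prod.mk s ⁻¹' B i)) atTop
          (𝓝 (P (⋃ i, Prod.mk s ⁻¹' B i) - P (⋃ i, Prod.mk s ⁻¹' B i))) :=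
        ENNReal.Tendsto.sub tendsto_const_nhds hlim (Or.inl (measure_ne_top P _))
      simpa using this
  exact main A hA _
end Helpers

section Part3
variable {E : Type*} [NormedAddCommGroup E]
  {Ω : Type*} {mΩ : MeasurableSpace Ω} {P : Measure Ω}

open scoped Classical in
/-- slice of a two-variable function as an element of L¹ (junk value 0 if not integrable). -/
private noncomputable def sliceL1 (P : Measure Ω) (f : ℝ × Ω → E) (s : ℝ) : Ω →₁[P] E :=
  if h : Integrable (fun ω => f (s, ω)) P then h.toL1 _ else 0

private lemma sliceL1_of_integrable {f : ℝ × Ω → E} {s : ℝ}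
    (h : Integrable (fun ω => f (s, ω)) P) :
    sliceL1 P f s = h.toL1 _ := by rw [sliceL1]; exact dif_pos h

private lemma sliceL1_coeFn {f : ℝ × Ω → E} {s : ℝ}
    (h : Integrable (fun ω => f (s, ω)) P) :
    (sliceL1 P f s : Ω → E) =ᵐ[P] fun ω => f (s, ω) := by
  rw [sliceL1_of_integrable h]; exact h.coeFn_toL1

private lemma integrable_slice_simpleFunc [IsFiniteMeasure P]
    (g : SimpleFunc (ℝ × Ω) E) (s : ℝ) :
    Integrable (fun ω => g (s, ω)) P := by
  obtain ⟨C, hC⟩ := g.exists_forall_norm_le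
  refine Integrable.mono' (integrable_const C)
    ((g.stronglyMeasurable.comp_measurable measurable_prodMk_left).aestronglyMeasurable) ?_
  exact Filter.Eventually.of_forall fun ω => hC _

private lemma sm_sliceL1_simpleFunc [IsFiniteMeasure P]
    (g : SimpleFunc (ℝ × Ω) E) :
    StronglyMeasurable (fun s => sliceL1 P (⇑g) s) := by
  induction g using SimpleFunc.induction with
  | @const c A hA =>
      have hsl : ∀ s : ℝ, MeasurableSet (Prod.mk s ⁻¹' A) :=
        fun s => hA.preimage measurable_prodMk_left
      have : (fun s => sliceL1 P (⇑(SimpleFunc.piecewise A hA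
            (SimpleFunc.const _ c) (SimpleFunc.const _ 0))) s)
          = fun s => (indicatorConstLp 1 (hsl s) (measure_ne_top P _) c : Ω →₁[P] E) := by
        funext s
        rw [sliceL1_of_integrable (integrable_slice_simpleFunc _ s)]
        refine Lp.ext ?_
        refine (Integrable.coeFn_toL1 _).trans ?_
        refine EventuallyEq.trans (Filter.Eventually.of_forall fun ω => ?_)
          indicatorConstLp_coeFn.symm
        by_cases hmem : (s, ω) ∈ A <;>
          simp [SimpleFunc.piecewise_apply, Set.indicator_apply, Set.mem_preimage, hmem]
      rw [this]
      exact sm_indicatorConstLp_slice c hA hsl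
  | @add f g _ ihf ihg =>
      have : (fun s => sliceL1 P (⇑(f + g)) s)
          = fun s => sliceL1 P (⇑f) s + sliceL1 P (⇑g) s := by
        funext s
        rw [sliceL1_of_integrable (integrable_slice_simpleFunc _ s),
          sliceL1_of_integrable (integrable_slice_simpleFunc f s),
          sliceL1_of_integrable (integrable_slice_simpleFunc g s)]
        refine Lp.ext ?_
        filter_upwards [Integrable.coeFn_toL1 (integrable_slice_simpleFunc (f + g) s),
          Lp.coeFn_add ((integrable_slice_simpleFunc f s).toL1 _)
            ((integrable_slice_simpleFunc g s).toL1 _),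
          Integrable.coeFn_toL1 (integrable_slice_simpleFunc f s),
          Integrable.coeFn_toL1 (integrable_slice_simpleFunc g s)] with ω h1 h2 h3 h4
        rw [h1, h2]
        simp only [Pi.add_apply]
        rw [h3, h4]
        simp
      rw [this]
      exact ihf.add ihg
end Part3

section Part4
variable {E : Type*} [NormedAddCommGroup E] [NormedSpace ℝ E]
  {Ω : Type*} {mΩ : MeasurableSpace Ω}

/-- integration over a set, as a continuous linear map on L¹. -/
private noncomputable def setIntegralL1CLM [CompleteSpace E] (P : Measure Ω) (A : Set Ω) :
    (Ω →₁[P] E) →L[ℝ] E :=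
  LinearMap.mkContinuous
    { toFun := fun u => ∫ ω in A, u ω ∂P
      map_add' := fun u v => by
        rw [← integral_add ((L1.integrable_coeFn u).restrict) ((L1.integrable_coeFn v).restrict)]
        refine integral_congr_ae (ae_restrict_of_ae ((Lp.coeFn_add u v).mono fun ω h => ?_))
        rw [h]; rfl
      map_smul' := fun r u => by
        simp only [RingHom.id_apply]
        rw [← integral_smul]
        refine integral_congr_ae (ae_restrict_of_ae ((Lp.coeFn_smul r u).mono fun ω h => ?_))
        rw [h]; rfl }
    1 (fun u => by
      simp only [LinearMap.coe_mk, AddHom.coe_mk, one_mul]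
      refine (norm_integral_le_integral_norm _).trans ?_
      rw [L1.norm_eq_integral_norm]
      exact integral_mono_measure Measure.restrict_le_self
        (Filter.Eventually.of_forall fun ω => norm_nonneg _)
        (L1.integrable_coeFn u).norm)

private lemma setIntegralL1CLM_apply [CompleteSpace E] (P : Measure Ω) (A : Set Ω)
    (u : Ω →₁[P] E) : setIntegralL1CLM P A u = ∫ ω in A, u ω ∂P := rfl

end Part4

private lemma aesm'_integral_slice
    {E : Type*} [NormedAddCommGroup E] [NormedSpace ℝ E]
    [CompleteSpace E] [MeasurableSpace E] [BorelSpace E] [SecondCountableTopology E]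
    {Ω : Type*} {m mΩ : MeasurableSpace Ω}
    (P : Measure Ω) [IsFiniteMeasure P]
    (hm : m ≤ mΩ)
    (μ : Measure ℝ) [IsFiniteMeasure μ]
    (f : ℝ × Ω → E) (hf : Measurable f)
    (hslice : ∀ᵐ s ∂μ, AEStronglyMeasurable[m] (fun ω => f (s, ω)) P)
    (hint : ∫⁻ s, ∫⁻ ω, (‖f (s, ω)‖₊ : ℝ≥0∞) ∂P ∂μ < ⊤) :
    AEStronglyMeasurable[m] (fun ω => ∫ s, f (s, ω) ∂μ) P := by
  haveI : SigmaFinite (P.trim hm) := inferInstance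
  have hf_sm : StronglyMeasurable f := hf.stronglyMeasurable
  have hslice_sm : ∀ s : ℝ, StronglyMeasurable (fun ω => f (s, ω)) :=
    fun s => hf_sm.comp_measurable measurable_prodMk_left
  -- a.e. slice integrability
  have hmeas_lint : Measurable fun s => ∫⁻ ω, (‖f (s, ω)‖₊ : ℝ≥0∞) ∂P :=
    Measurable.lintegral_prod_right' (ν := P) (f := fun p => (‖f p‖₊ : ℝ≥0∞)) hf.nnnorm.coe_nnreal_ennreal
  have hInt_ae : ∀ᵐ s ∂μ, Integrable (fun ω => f (s, ω)) P := by
    filter_upwards [ae_lt_top hmeas_lint hint.ne] with s hs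
    exact ⟨(hslice_sm s).aestronglyMeasurable, hs⟩
  -- the approximating simple functions
  set g : ℕ → SimpleFunc (ℝ × Ω) E :=
    fun n => SimpleFunc.approxOn f hf Set.univ 0 (Set.mem_univ 0) n with hg
  have htendsto : ∀ p, Tendsto (fun n => g n p) atTop (𝓝 (f p)) := by
    intro p
    exact SimpleFunc.tendsto_approxOn hf (Set.mem_univ 0) (by simp)
  have hbound : ∀ n p, ‖g n p‖ ≤ ‖f p‖ + ‖f p‖ :=
    fun n p => SimpleFunc.norm_approxOn_zero_le hf (Set.mem_univ 0) p n
  -- the L¹-valued map and its measurability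
  set φ : ℝ → (Ω →₁[P] E) := sliceL1 P f with hφ
  have hφ_ae_tendsto : ∀ᵐ s ∂μ, Tendsto (fun n => sliceL1 P (⇑(g n)) s) atTop (𝓝 (φ s)) := by
    filter_upwards [hInt_ae] with s hs
    have hgs_int : ∀ n, Integrable (fun ω => g n (s, ω)) P := fun n =>
      Integrable.mono' (hs.norm.add hs.norm)
        (((g n).stronglyMeasurable.comp_measurable measurable_prodMk_left).aestronglyMeasurable)
        (Filter.Eventually.of_forall fun ω => hbound n (s, ω))
    rw [tendsto_iff_norm_sub_tendsto_zero]
    have hnorm : ∀ n, ‖sliceL1 P (⇑(g n)) s - φ s‖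
        = (∫⁻ ω, (‖g n (s, ω) - f (s, ω)‖₊ : ℝ≥0∞) ∂P).toReal := by
      intro n
      rw [hφ, sliceL1_of_integrable (hgs_int n), sliceL1_of_integrable hs,
        ← Integrable.toL1_sub]
      have h := Integrable.enorm_toL1 ((hgs_int n).sub hs)
      calc ‖Integrable.toL1 _ ((hgs_int n).sub hs)‖
          = ((‖Integrable.toL1 _ ((hgs_int n).sub hs)‖₊ : ℝ≥0∞)).toReal := by
            rw [ENNReal.coe_toReal, coe_nnnorm]
        _ = (∫⁻ ω, (‖g n (s, ω) - f (s, ω)‖₊ : ℝ≥0∞) ∂P).toReal := by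
            exact congrArg ENNReal.toReal h
    simp only [hnorm]
    have hDCT : Tendsto (fun n => ∫⁻ ω, (‖g n (s, ω) - f (s, ω)‖₊ : ℝ≥0∞) ∂P) atTop (𝓝 0) := by
      have hDCT0 : Tendsto (fun n => ∫⁻ ω, (‖g n (s, ω) - f (s, ω)‖₊ : ℝ≥0∞) ∂P) atTop
          (𝓝 (∫⁻ _ω : Ω, (0 : ℝ≥0∞) ∂P)) := by
        refine tendsto_lintegral_of_dominated_convergence
          (fun ω => (‖f (s, ω)‖₊ : ℝ≥0∞) + ((‖f (s, ω)‖₊ : ℝ≥0∞) + (‖f (s, ω)‖₊ : ℝ≥0∞)))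
          (fun n => ?_) (fun n => Filter.Eventually.of_forall fun ω => ?_) ?_
          (Filter.Eventually.of_forall fun ω => ?_)
        · exact ((((g n).stronglyMeasurable.comp_measurable
            measurable_prodMk_left).measurable.sub
              (hslice_sm s).measurable).nnnorm).coe_nnreal_ennreal
        · -- domination
          have hle : ‖g n (s, ω) - f (s, ω)‖ ≤ ‖f (s, ω)‖ + (‖f (s, ω)‖ + ‖f (s, ω)‖) := by
            have h1 : ‖g n (s, ω) - f (s, ω)‖ ≤ ‖g n (s, ω)‖ + ‖f (s, ω)‖ := norm_sub_le _ _
            have h2 : ‖g n (s, ω)‖ ≤ ‖f (s, ω)‖ + ‖f (s, ω)‖ := hbound n (s, ω)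
            linarith
          calc (‖g n (s, ω) - f (s, ω)‖₊ : ℝ≥0∞)
              = ENNReal.ofReal ‖g n (s, ω) - f (s, ω)‖ := (ofReal_norm _).symm
            _ ≤ ENNReal.ofReal (‖f (s, ω)‖ + (‖f (s, ω)‖ + ‖f (s, ω)‖)) :=
                ENNReal.ofReal_le_ofReal hle
            _ = _ := by
                rw [ENNReal.ofReal_add (norm_nonneg _) (by positivity),
                  ENNReal.ofReal_add (norm_nonneg _) (norm_nonneg _),
                  ofReal_norm, enorm_eq_nnnorm]
        · -- integrability of the bound
          have hfin : (∫⁻ ω, (‖f (s, ω)‖₊ : ℝ≥0∞) ∂P) < ⊤ := hs.2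
          refine ne_of_lt ?_
          calc ∫⁻ ω, ((‖f (s, ω)‖₊ : ℝ≥0∞) + ((‖f (s, ω)‖₊ : ℝ≥0∞) + (‖f (s, ω)‖₊ : ℝ≥0∞))) ∂P
              = (∫⁻ ω, (‖f (s, ω)‖₊ : ℝ≥0∞) ∂P) + ∫⁻ ω, ((‖f (s, ω)‖₊ : ℝ≥0∞)
                  + (‖f (s, ω)‖₊ : ℝ≥0∞)) ∂P := by
                rw [lintegral_add_left ((hslice_sm s).measurable.nnnorm.coe_nnreal_ennreal)]
            _ = (∫⁻ ω, (‖f (s, ω)‖₊ : ℝ≥0∞) ∂P) + ((∫⁻ ω, (‖f (s, ω)‖₊ : ℝ≥0∞) ∂P)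
                  + ∫⁻ ω, (‖f (s, ω)‖₊ : ℝ≥0∞) ∂P) := by
                rw [lintegral_add_left ((hslice_sm s).measurable.nnnorm.coe_nnreal_ennreal)]
            _ < ⊤ := ENNReal.add_lt_top.mpr ⟨hfin, ENNReal.add_lt_top.mpr ⟨hfin, hfin⟩⟩
        · -- pointwise convergence to 0
          have h0 : Tendsto (fun n => g n (s, ω) - f (s, ω)) atTop (𝓝 0) := by
            simpa using (htendsto (s, ω)).sub (tendsto_const_nhds (x := f (s, ω)))
          have h1 := (continuous_nnnorm.tendsto (0 : E)).comp h0
          rw [nnnorm_zero] at h1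
          simpa using ENNReal.tendsto_coe.mpr h1
      simpa using hDCT0
    have := (ENNReal.tendsto_toReal (a := 0) (by simp)).comp hDCT
    simpa [Function.comp_def] using this
  have hφ_aesm : AEStronglyMeasurable φ μ :=
    aestronglyMeasurable_of_tendsto_ae atTop
      (fun n => (sm_sliceL1_simpleFunc (g n)).aestronglyMeasurable) hφ_ae_tendsto
  -- φ is Bochner integrable
  have hφ_nnnorm : ∀ᵐ s ∂μ, (‖φ s‖₊ : ℝ≥0∞) = ∫⁻ ω, (‖f (s, ω)‖₊ : ℝ≥0∞) ∂P := by
    filter_upwards [hInt_ae] with s hs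
    rw [hφ, sliceL1_of_integrable hs]
    exact Integrable.enorm_toL1 hs
  have hφ_int : Integrable φ μ := by
    refine ⟨hφ_aesm, ?_⟩
    show (∫⁻ s, (‖φ s‖₊ : ℝ≥0∞) ∂μ) < ⊤
    rw [lintegral_congr_ae hφ_nnnorm]
    exact hint
  -- apply the conditional expectation operator
  set T : (Ω →₁[P] E) →L[ℝ] (Ω →₁[P] E) := condExpL1CLM E hm P with hT
  have hTφ : ∀ᵐ s ∂μ, T (φ s) = φ s := by
    filter_upwards [hInt_ae, hslice] with s hs hsl
    exact condExpL1CLM_of_aestronglyMeasurable' _ (hsl.congr (sliceL1_coeFn hs).symm)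
  set Φ : Ω →₁[P] E := ∫ s, φ s ∂μ with hΦ
  have hTΦ : T Φ = Φ := by
    rw [hΦ, ← ContinuousLinearMap.integral_comp_comm T hφ_int]
    exact integral_congr_ae hTφ
  have hΦ_meas : AEStronglyMeasurable[m] (⇑Φ) P := by
    rw [← hTΦ]
    exact aestronglyMeasurable_condExpL1CLM Φ
  -- identify Φ with the pointwise integral
  have hg_sm : StronglyMeasurable (fun ω => ∫ s, f (s, ω) ∂μ) :=
    hf_sm.integral_prod_left'
  have hswap : ∫⁻ ω, ∫⁻ s, (‖f (s, ω)‖₊ : ℝ≥0∞) ∂μ ∂P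
      = ∫⁻ s, ∫⁻ ω, (‖f (s, ω)‖₊ : ℝ≥0∞) ∂P ∂μ := by
    exact lintegral_lintegral_swap (hf.nnnorm.coe_nnreal_ennreal.comp measurable_swap).aemeasurable
  have hg_int : Integrable (fun ω => ∫ s, f (s, ω) ∂μ) P := by
    refine ⟨hg_sm.aestronglyMeasurable, ?_⟩
    show (∫⁻ ω, (‖∫ s, f (s, ω) ∂μ‖₊ : ℝ≥0∞) ∂P) < ⊤
    calc (∫⁻ ω, (‖∫ s, f (s, ω) ∂μ‖₊ : ℝ≥0∞) ∂P)
        ≤ ∫⁻ ω, ∫⁻ s, (‖f (s, ω)‖₊ : ℝ≥0∞) ∂μ ∂P :=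
          lintegral_mono fun ω => enorm_integral_le_lintegral_enorm _
      _ = ∫⁻ s, ∫⁻ ω, (‖f (s, ω)‖₊ : ℝ≥0∞) ∂P ∂μ := hswap
      _ < ⊤ := hint
  have hset : ∀ A : Set Ω, MeasurableSet A → P A < ⊤ →
      ∫ ω in A, (Φ : Ω → E) ω ∂P = ∫ ω in A, (∫ s, f (s, ω) ∂μ) ∂P := by
    intro A hA _
    have h1 : setIntegralL1CLM P A Φ = ∫ s, setIntegralL1CLM P A (φ s) ∂μ := by
      rw [hΦ]
      exact (ContinuousLinearMap.integral_comp_comm _ hφ_int).symm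
    have h2 : ∫ s, setIntegralL1CLM P A (φ s) ∂μ
        = ∫ s, (∫ ω in A, f (s, ω) ∂P) ∂μ := by
      refine integral_congr_ae ?_
      filter_upwards [hInt_ae] with s hs
      rw [setIntegralL1CLM_apply]
      exact setIntegral_congr_ae hA ((sliceL1_coeFn hs).mono fun ω h _ => h)
    have hfi_res : Integrable f (μ.prod (P.restrict A)) := by
      refine ⟨hf.aestronglyMeasurable, ?_⟩
      show (∫⁻ p, (‖f p‖₊ : ℝ≥0∞) ∂(μ.prod (P.restrict A))) < ⊤
      rw [lintegral_prod _ hf.nnnorm.coe_nnreal_ennreal.aemeasurable]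
      calc ∫⁻ s, ∫⁻ ω in A, (‖f (s, ω)‖₊ : ℝ≥0∞) ∂P ∂μ
          ≤ ∫⁻ s, ∫⁻ ω, (‖f (s, ω)‖₊ : ℝ≥0∞) ∂P ∂μ :=
            lintegral_mono fun s => setLIntegral_le_lintegral _ _
        _ < ⊤ := hint
    have h3 : ∫ s, (∫ ω in A, f (s, ω) ∂P) ∂μ = ∫ ω in A, (∫ s, f (s, ω) ∂μ) ∂P :=
      integral_integral_swap (f := fun s ω => f (s, ω)) hfi_res
    rw [setIntegralL1CLM_apply] at h1
    rw [h1, h2, h3]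
  have hΦ_eq : (⇑Φ : Ω → E) =ᵐ[P] fun ω => ∫ s, f (s, ω) ∂μ :=
    Integrable.ae_eq_of_forall_setIntegral_eq _ _ (L1.integrable_coeFn Φ) hg_int hset
  exact hΦ_meas.congr hΦ_eq


/-- Innovation theorem (martingale-property core): if `Y_t = Y_0 + ∫_0^t H_s ds + W_t`
with `W` an `𝓕`-martingale vanishing at `0` and `H` an adapted integrable drift, and if
`G_s` is a version of `E[H_s | 𝓡_s]` for a smaller filtration `𝓡` making `Y_t − Y_0`
measurable, then `M_t = Y_t − Y_0 − ∫_0^t G_s ds` is a martingale for `(𝓡_t)` and `P`. -/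
theorem innovation_martingale
    {Ω : Type*} {mΩ : MeasurableSpace Ω}
    (P : Measure Ω) [IsProbabilityMeasure P]
    {d : ℕ} (T : ℝ) (hT : 0 < T)
    -- the filtration 𝓕
    (F : ℝ → MeasurableSpace Ω)
    (hF_le : ∀ t, F t ≤ mΩ) (hF_mono : ∀ s t, s ≤ t → F s ≤ F t)
    -- W is an 𝓕-martingale on [0,T] with W 0 = 0
    (W : ℝ → Ω → EuclideanSpace ℝ (Fin d))
    (hW_adapted : ∀ t ∈ Set.Icc (0 : ℝ) T, StronglyMeasurable[F t] (W t))
    (hW_int : ∀ t ∈ Set.Icc (0 : ℝ) T, Integrable (W t) P)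
    (hW_mart : ∀ τ ∈ Set.Icc (0 : ℝ) T, ∀ t ∈ Set.Icc (0 : ℝ) T, τ ≤ t →
      P[W t | F τ] =ᵐ[P] W τ)
    (hW0 : W 0 = fun _ => 0)
    -- the drift H: jointly measurable, 𝓕-adapted, with E[∫_0^T ‖H_s‖ ds] < ∞
    (H : ℝ → Ω → EuclideanSpace ℝ (Fin d))
    (hH_meas : Measurable (Function.uncurry H))
    (hH_adapted : ∀ t ∈ Set.Icc (0 : ℝ) T, StronglyMeasurable[F t] (H t))
    (hH_int : ∫⁻ ω, (∫⁻ s in Set.Ioc (0 : ℝ) T, (‖H s ω‖₊ : ℝ≥0∞)) ∂P < ⊤)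
    -- the measurement process Y
    (Y : ℝ → Ω → EuclideanSpace ℝ (Fin d)) (Y₀ : Ω → EuclideanSpace ℝ (Fin d))
    (hY : ∀ t ω, Y t ω = Y₀ ω + (∫ s in Set.Ioc (0 : ℝ) t, H s ω) + W t ω)
    -- the smaller filtration 𝓡
    (R : ℝ → MeasurableSpace Ω)
    (hR_le : ∀ t, R t ≤ F t) (hR_mono : ∀ s t, s ≤ t → R s ≤ R t)
    (hYR : ∀ t ∈ Set.Icc (0 : ℝ) T,
      StronglyMeasurable[R t] (fun ω => Y t ω - Y₀ ω))
    -- G is a jointly measurable 𝓡-adapted version of E[H_s | 𝓡_s]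
    (G : ℝ → Ω → EuclideanSpace ℝ (Fin d))
    (hG_meas : Measurable (Function.uncurry G))
    (hG_adapted : ∀ t ∈ Set.Icc (0 : ℝ) T, StronglyMeasurable[R t] (G t))
    (hG_int : ∫⁻ ω, (∫⁻ s in Set.Ioc (0 : ℝ) T, (‖G s ω‖₊ : ℝ≥0∞)) ∂P < ⊤)
    (hG_ver : ∀ s ∈ Set.Icc (0 : ℝ) T, G s =ᵐ[P] P[H s | R s])
    -- the innovation process M
    (M : ℝ → Ω → EuclideanSpace ℝ (Fin d))
    (hM : ∀ t ω, M t ω = Y t ω - Y₀ ω - ∫ s in Set.Ioc (0 : ℝ) t, G s ω) :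
    -- M is a martingale with respect to (𝓡_t) and P
    (∀ t ∈ Set.Icc (0 : ℝ) T,
        AEStronglyMeasurable[R t] (M t) P ∧ Integrable (M t) P) ∧
    (∀ τ ∈ Set.Icc (0 : ℝ) T, ∀ t ∈ Set.Icc (0 : ℝ) T, τ ≤ t →
        P[M t | R τ] =ᵐ[P] M τ) := by
  classical
  have hRle : ∀ u, R u ≤ mΩ := fun u => (hR_le u).trans (hF_le u)
  have finRes : ∀ a b : ℝ, IsFiniteMeasure (volume.restrict (Set.Ioc a b)) := fun a b =>
    ⟨by rw [Measure.restrict_apply_univ]; exact measure_Ioc_lt_top⟩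
  haveI := finRes 0 T
  -- swapped integrability and a.e.-slice integrability for a generic drift D
  have K4 : ∀ D : ℝ → Ω → EuclideanSpace ℝ (Fin d), Measurable (Function.uncurry D) →
      (∫⁻ ω, (∫⁻ s in Set.Ioc (0 : ℝ) T, (‖D s ω‖₊ : ℝ≥0∞)) ∂P < ⊤) →
      (∫⁻ s in Set.Ioc (0 : ℝ) T, ∫⁻ ω, (‖D s ω‖₊ : ℝ≥0∞) ∂P < ⊤) ∧
      (∀ᵐ s ∂(volume.restrict (Set.Ioc (0 : ℝ) T)), Integrable (D s) P) := by
    intro D hD hDint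
    have hswap : ∫⁻ ω, (∫⁻ s in Set.Ioc (0 : ℝ) T, (‖D s ω‖₊ : ℝ≥0∞)) ∂P
        = ∫⁻ s in Set.Ioc (0 : ℝ) T, ∫⁻ ω, (‖D s ω‖₊ : ℝ≥0∞) ∂P :=
      lintegral_lintegral_swap ((hD.comp measurable_swap).nnnorm.coe_nnreal_ennreal).aemeasurable
    rw [hswap] at hDint
    refine ⟨hDint, ?_⟩
    have hmeas : Measurable fun s => ∫⁻ ω, (‖D s ω‖₊ : ℝ≥0∞) ∂P :=
      Measurable.lintegral_prod_right' (ν := P) hD.nnnorm.coe_nnreal_ennreal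
    filter_upwards [ae_lt_top hmeas hDint.ne] with s hs
    exact ⟨((hD.comp (measurable_const.prodMk measurable_id)).stronglyMeasurable).aestronglyMeasurable, hs⟩
  -- a.e. ω-integrability in s
  have K1 : ∀ D : ℝ → Ω → EuclideanSpace ℝ (Fin d), Measurable (Function.uncurry D) →
      (∫⁻ ω, (∫⁻ s in Set.Ioc (0 : ℝ) T, (‖D s ω‖₊ : ℝ≥0∞)) ∂P < ⊤) →
      ∀ a b : ℝ, Set.Ioc a b ⊆ Set.Ioc (0 : ℝ) T →
      ∀ᵐ ω ∂P, IntegrableOn (fun s => D s ω) (Set.Ioc a b) volume := by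
    intro D hD hDint a b hsub
    have hmeasω : Measurable fun ω => ∫⁻ s in Set.Ioc (0 : ℝ) T, (‖D s ω‖₊ : ℝ≥0∞) :=
      Measurable.lintegral_prod_right' (ν := volume.restrict (Set.Ioc (0 : ℝ) T))
        ((hD.comp measurable_swap).nnnorm.coe_nnreal_ennreal)
    filter_upwards [ae_lt_top hmeasω hDint.ne] with ω hω
    refine ⟨((hD.comp (measurable_id.prodMk measurable_const)).stronglyMeasurable).aestronglyMeasurable, ?_⟩
    exact lt_of_le_of_lt (lintegral_mono_set hsub) hω
  -- integrability of the time-integral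
  have K2 : ∀ D : ℝ → Ω → EuclideanSpace ℝ (Fin d), Measurable (Function.uncurry D) →
      (∫⁻ ω, (∫⁻ s in Set.Ioc (0 : ℝ) T, (‖D s ω‖₊ : ℝ≥0∞)) ∂P < ⊤) →
      ∀ a b : ℝ, Set.Ioc a b ⊆ Set.Ioc (0 : ℝ) T →
      Integrable (fun ω => ∫ s in Set.Ioc a b, D s ω) P := by
    intro D hD hDint a b hsub
    haveI := finRes a b
    refine ⟨(StronglyMeasurable.integral_prod_right
      (f := fun ω s => D s ω) ((hD.comp measurable_swap).stronglyMeasurable)).aestronglyMeasurable, ?_⟩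
    show (∫⁻ ω, (‖∫ s in Set.Ioc a b, D s ω‖₊ : ℝ≥0∞) ∂P) < ⊤
    calc (∫⁻ ω, (‖∫ s in Set.Ioc a b, D s ω‖₊ : ℝ≥0∞) ∂P)
        ≤ ∫⁻ ω, (∫⁻ s in Set.Ioc a b, (‖D s ω‖₊ : ℝ≥0∞)) ∂P :=
          lintegral_mono fun ω => enorm_integral_le_lintegral_enorm _
      _ ≤ ∫⁻ ω, (∫⁻ s in Set.Ioc (0 : ℝ) T, (‖D s ω‖₊ : ℝ≥0∞)) ∂P :=
          lintegral_mono fun ω => lintegral_mono_set hsub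
      _ < ⊤ := hDint
  -- Fubini over a measurable set A
  have K3 : ∀ D : ℝ → Ω → EuclideanSpace ℝ (Fin d), Measurable (Function.uncurry D) →
      (∫⁻ ω, (∫⁻ s in Set.Ioc (0 : ℝ) T, (‖D s ω‖₊ : ℝ≥0∞)) ∂P < ⊤) →
      ∀ a b : ℝ, Set.Ioc a b ⊆ Set.Ioc (0 : ℝ) T →
      ∀ A : Set Ω, MeasurableSet A →
      ∫ ω in A, (∫ s in Set.Ioc a b, D s ω) ∂P
        = ∫ s in Set.Ioc a b, (∫ ω in A, D s ω ∂P) := by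
    intro D hD hDint a b hsub A hA
    haveI := finRes a b
    have hDswap := (K4 D hD hDint).1
    have hprod : Integrable (Function.uncurry D)
        ((volume.restrict (Set.Ioc a b)).prod (P.restrict A)) := by
      refine ⟨hD.aestronglyMeasurable, ?_⟩
      show (∫⁻ p, (‖Function.uncurry D p‖₊ : ℝ≥0∞)
          ∂((volume.restrict (Set.Ioc a b)).prod (P.restrict A))) < ⊤
      rw [lintegral_prod _ hD.nnnorm.coe_nnreal_ennreal.aemeasurable]
      calc ∫⁻ s in Set.Ioc a b, ∫⁻ ω in A, (‖D s ω‖₊ : ℝ≥0∞) ∂P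
          ≤ ∫⁻ s in Set.Ioc a b, ∫⁻ ω, (‖D s ω‖₊ : ℝ≥0∞) ∂P :=
            lintegral_mono fun s => lintegral_mono' Measure.restrict_le_self le_rfl
        _ ≤ ∫⁻ s in Set.Ioc (0 : ℝ) T, ∫⁻ ω, (‖D s ω‖₊ : ℝ≥0∞) ∂P :=
            lintegral_mono_set hsub
        _ < ⊤ := hDswap
    exact (integral_integral_swap (f := fun s ω => D s ω) hprod).symm
  -- measurability of the G-integral w.r.t. R t
  have hJmeas : ∀ t ∈ Set.Icc (0 : ℝ) T, AEStronglyMeasurable[R t]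
      (fun ω => ∫ s in Set.Ioc (0 : ℝ) t, G s ω) P := by
    intro t ht
    haveI := finRes 0 t
    refine aesm'_integral_slice P (hRle t) (volume.restrict (Set.Ioc (0 : ℝ) t))
      (Function.uncurry G) hG_meas ?_ ?_
    · filter_upwards [ae_restrict_mem measurableSet_Ioc] with s hs
      have hsIcc : s ∈ Set.Icc (0 : ℝ) T := ⟨le_of_lt hs.1, hs.2.trans ht.2⟩
      exact ((hG_adapted s hsIcc).mono (hR_mono s t hs.2)).aestronglyMeasurable
    · calc ∫⁻ s in Set.Ioc (0 : ℝ) t, ∫⁻ ω, (‖Function.uncurry G (s, ω)‖₊ : ℝ≥0∞) ∂P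
          ≤ ∫⁻ s in Set.Ioc (0 : ℝ) T, ∫⁻ ω, (‖G s ω‖₊ : ℝ≥0∞) ∂P :=
            lintegral_mono_set (Set.Ioc_subset_Ioc le_rfl ht.2)
        _ < ⊤ := (K4 G hG_meas hG_int).1
  -- representation of M
  have hMrep : ∀ t, M t = fun ω => (∫ s in Set.Ioc (0 : ℝ) t, H s ω) + W t ω
      - ∫ s in Set.Ioc (0 : ℝ) t, G s ω := by
    intro t
    funext ω
    rw [hM, hY]
    abel
  -- Part I
  have part1 : ∀ t ∈ Set.Icc (0 : ℝ) T,
      AEStronglyMeasurable[R t] (M t) P ∧ Integrable (M t) P := by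
    intro t ht
    have hsub : Set.Ioc (0 : ℝ) t ⊆ Set.Ioc (0 : ℝ) T := Set.Ioc_subset_Ioc le_rfl ht.2
    constructor
    · refine AEStronglyMeasurable.congr
        (((hYR t ht).aestronglyMeasurable).sub (hJmeas t ht)) ?_
      exact Filter.Eventually.of_forall fun ω => (hM t ω).symm
    · rw [hMrep t]
      exact ((K2 H hH_meas hH_int 0 t hsub).add (hW_int t ht)).sub
        (K2 G hG_meas hG_int 0 t hsub)
  refine ⟨part1, ?_⟩
  -- Part II : the martingale property
  intro τ hτ t ht hτt
  haveI : SigmaFinite (P.trim (hRle τ)) := inferInstance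
  have hMt_int : Integrable (M t) P := (part1 t ht).2
  have hMτ_int : Integrable (M τ) P := (part1 τ hτ).2
  refine (ae_eq_condExp_of_forall_setIntegral_eq (hRle τ) hMt_int
    (fun A _ _ => hMτ_int.integrableOn) (fun A hA _ => ?_) (part1 τ hτ).1).symm
  have hA' : MeasurableSet A := hRle τ A hA
  have hsub0t : Set.Ioc (0 : ℝ) t ⊆ Set.Ioc (0 : ℝ) T := Set.Ioc_subset_Ioc le_rfl ht.2
  have hsub0τ : Set.Ioc (0 : ℝ) τ ⊆ Set.Ioc (0 : ℝ) T := Set.Ioc_subset_Ioc le_rfl hτ.2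
  have hsubτt : Set.Ioc τ t ⊆ Set.Ioc (0 : ℝ) T := Set.Ioc_subset_Ioc hτ.1 ht.2
  -- splitting the time interval
  have split : ∀ D : ℝ → Ω → EuclideanSpace ℝ (Fin d), Measurable (Function.uncurry D) →
      (∫⁻ ω, (∫⁻ s in Set.Ioc (0 : ℝ) T, (‖D s ω‖₊ : ℝ≥0∞)) ∂P < ⊤) →
      ∫ ω in A, (∫ s in Set.Ioc (0 : ℝ) t, D s ω) ∂P
        = ∫ ω in A, (∫ s in Set.Ioc (0 : ℝ) τ, D s ω) ∂P
          + ∫ ω in A, (∫ s in Set.Ioc τ t, D s ω) ∂P := by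
    intro D hD hDint
    have hae : ∀ᵐ ω ∂P, (∫ s in Set.Ioc (0 : ℝ) t, D s ω)
        = (∫ s in Set.Ioc (0 : ℝ) τ, D s ω) + ∫ s in Set.Ioc τ t, D s ω := by
      filter_upwards [K1 D hD hDint 0 t hsub0t] with ω hω
      rw [← setIntegral_union (Set.Ioc_disjoint_Ioc_of_le le_rfl) measurableSet_Ioc
        (hω.mono_set (Set.Ioc_subset_Ioc le_rfl hτt))
        (hω.mono_set (Set.Ioc_subset_Ioc hτ.1 le_rfl)),
        Set.Ioc_union_Ioc_eq_Ioc hτ.1 hτt]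
    rw [integral_congr_ae (ae_restrict_of_ae hae),
      integral_add ((K2 D hD hDint 0 τ hsub0τ).integrableOn)
        ((K2 D hD hDint τ t hsubτt).integrableOn)]
  -- the W part
  have hWpart : ∫ ω in A, W t ω ∂P = ∫ ω in A, W τ ω ∂P := by
    haveI : SigmaFinite (P.trim (hF_le τ)) := inferInstance
    have h1 := setIntegral_condExp (hF_le τ) (hW_int t ht) (hR_le τ A hA)
    have h2 : ∫ ω in A, (P[W t|F τ]) ω ∂P = ∫ ω in A, W τ ω ∂P :=
      integral_congr_ae (ae_restrict_of_ae (hW_mart τ hτ t ht hτt))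
    rw [← h1, h2]
  -- the H-vs-G part on (τ, t]
  have hHG : ∫ ω in A, (∫ s in Set.Ioc τ t, H s ω) ∂P
      = ∫ ω in A, (∫ s in Set.Ioc τ t, G s ω) ∂P := by
    rw [K3 H hH_meas hH_int τ t hsubτt A hA', K3 G hG_meas hG_int τ t hsubτt A hA']
    refine integral_congr_ae ?_
    have hHae : ∀ᵐ s ∂(volume.restrict (Set.Ioc τ t)), Integrable (H s) P :=
      ae_restrict_of_ae_restrict_of_subset hsubτt (K4 H hH_meas hH_int).2
    have hGae : ∀ᵐ s ∂(volume.restrict (Set.Ioc τ t)), Integrable (G s) P :=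
      ae_restrict_of_ae_restrict_of_subset hsubτt (K4 G hG_meas hG_int).2
    filter_upwards [hHae, hGae, ae_restrict_mem measurableSet_Ioc] with s hsH _hsG hs
    haveI : SigmaFinite (P.trim (hRle s)) := inferInstance
    have hsIcc : s ∈ Set.Icc (0 : ℝ) T := ⟨hτ.1.trans hs.1.le, hs.2.trans ht.2⟩
    have hAs : MeasurableSet[R s] A := hR_mono τ s hs.1.le A hA
    calc ∫ ω in A, H s ω ∂P = ∫ ω in A, (P[H s|R s]) ω ∂P :=
          (setIntegral_condExp (hRle s) hsH hAs).symm
      _ = ∫ ω in A, G s ω ∂P :=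
          (integral_congr_ae (ae_restrict_of_ae (hG_ver s hsIcc))).symm
  -- expand the set integrals of M
  have expand : ∀ u, u ∈ Set.Icc (0 : ℝ) T →
      ∫ ω in A, M u ω ∂P = ∫ ω in A, (∫ s in Set.Ioc (0 : ℝ) u, H s ω) ∂P
        + ∫ ω in A, W u ω ∂P - ∫ ω in A, (∫ s in Set.Ioc (0 : ℝ) u, G s ω) ∂P := by
    intro u hu
    have hsubu : Set.Ioc (0 : ℝ) u ⊆ Set.Ioc (0 : ℝ) T := Set.Ioc_subset_Ioc le_rfl hu.2
    have hMrep' : M u = ((fun ω => ∫ s in Set.Ioc (0 : ℝ) u, H s ω) + W u)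
        - fun ω => ∫ s in Set.Ioc (0 : ℝ) u, G s ω := by
      funext ω
      simp only [Pi.sub_apply, Pi.add_apply]
      rw [hM, hY]
      abel
    rw [hMrep',
      integral_sub' (((K2 H hH_meas hH_int 0 u hsubu).add (hW_int u hu)).integrableOn)
        ((K2 G hG_meas hG_int 0 u hsubu).integrableOn),
      integral_add' ((K2 H hH_meas hH_int 0 u hsubu).integrableOn)
        ((hW_int u hu).integrableOn)]
  rw [expand t ht, expand τ hτ, split H hH_meas hH_int, split G hG_meas hG_int,
    hWpart, hHG]
  abel
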